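/- Hardy-type estimate for the homogeneous Da Prato–Grisvard seminorm: for every θ ∈ (0,1), 1 ≤ q ≤ ∞ and every z ∈ Ḋ_A(θ,q), ‖ t ↦ t^{−θ} ∫₀ᵗ ‖s Ȧ e^{−sA} z‖_X ds/s + t^{1−θ} ‖Ȧ e^{−tA} z‖_X ‖_{L_{q,*}((0,∞))} ≤ ((1 + θ)/θ) ‖z‖_{Ḋ_A(θ,q)}. -/

import Mathlib

open MeasureTheory Filter Topology Set
open scoped ENNReal NNReal

attribute [local instance] Classical.propDecidable

noncomputable section

/-- The measure `dt/t` on `(0,∞)`, used for the `L_{q,*}` spaces. -/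
def haarScale : MeasureTheory.Measure ℝ :=
  (MeasureTheory.volume.restrict (Set.Ioi (0:ℝ))).withDensity fun t => ENNReal.ofReal t⁻¹

/-- The `L_q` norm of an `ℝ≥0∞`-valued quantity with respect to a measure on `ℝ`. -/
def lqNorm (q : ℝ≥0∞) (μ : MeasureTheory.Measure ℝ) (F : ℝ → ℝ≥0∞) : ℝ≥0∞ :=
  if q = ⊤ then essSup F μ else (∫⁻ t, F t ^ q.toReal ∂μ) ^ (1 / q.toReal)

/-- The time interval `(0, T)` for `T ∈ (0,∞]`. -/
def timeInterval (T : ℝ≥0∞) : Set ℝ := {t : ℝ | 0 < t ∧ ENNReal.ofReal t < T}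

/-- The abstract setting of the homogeneous Da Prato–Grisvard theory: `X` is a complex
Banach space, `A : D(A) ⊆ X → X` is a closed, densely defined, injective linear operator
such that `−A` generates a bounded strongly continuous analytic semigroup `(e^{−tA})_{t≥0}`
(encoded by the field `S` together with the bounds `S_bdd` and `S_analytic` and the
generator identities `gen_eq` and `gen_eq_dom`); `Y` is a normed space, compatible with `X`
inside an ambient Hausdorff topological vector space `Z`, with `D(A) ⊆ Y` and
`C₁‖Ax‖ ≤ ‖x‖_Y ≤ C₂‖Ax‖` on `D(A)`; moreover `D(Ȧ) ∩ X = D(A)` (field `inter_sub`). -/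
structure DPG (X Y Z : Type*) [NormedAddCommGroup X] [NormedSpace ℂ X] [CompleteSpace X]
    [NormedAddCommGroup Y] [NormedSpace ℂ Y]
    [AddCommGroup Z] [Module ℂ Z] [TopologicalSpace Z] [T2Space Z] : Type _ where
  ιX : X →ₗ[ℂ] Z
  ιY : Y →ₗ[ℂ] Z
  ιX_inj : Function.Injective ιX
  ιY_inj : Function.Injective ιY
  dom : Submodule ℂ X
  dom_dense : Dense (dom : Set X)
  Aop : dom →ₗ[ℂ] X
  A_closed : IsClosed {p : X × X | ∃ x : dom, (x : X) = p.1 ∧ Aop x = p.2}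
  A_inj : ∀ x : dom, Aop x = 0 → (x : X) = 0
  jY : dom →ₗ[ℂ] Y
  j_compat : ∀ x : dom, ιX (x : X) = ιY (jY x)
  C₁ : ℝ
  C₂ : ℝ
  C₁_pos : 0 < C₁
  C₂_pos : 0 < C₂
  normY_lower : ∀ x : dom, C₁ * ‖Aop x‖ ≤ ‖jY x‖
  normY_upper : ∀ x : dom, ‖jY x‖ ≤ C₂ * ‖Aop x‖
  S : ℝ → X →L[ℂ] X
  S_zero : S 0 = 1
  S_add : ∀ s t : ℝ, 0 ≤ s → 0 ≤ t → S (s + t) = (S s).comp (S t)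
  S_strong_cont : ∀ x : X, ContinuousOn (fun t => S t x) (Set.Ici (0:ℝ))
  M₀ : ℝ
  S_bdd : ∀ t : ℝ, 0 ≤ t → ‖S t‖ ≤ M₀
  S_smoothing : ∀ (t : ℝ), 0 < t → ∀ x : X, S t x ∈ dom
  M : ℝ
  S_analytic : ∀ (t : ℝ) (ht : 0 < t) (x : X),
    t * ‖Aop ⟨S t x, S_smoothing t ht x⟩‖ ≤ M * ‖x‖
  int_mem : ∀ (x : X) (t : ℝ), (∫ s in Set.Ioc (0:ℝ) t, S s x) ∈ dom
  gen_eq : ∀ (x : X) (t : ℝ), 0 ≤ t →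
    Aop ⟨∫ s in Set.Ioc (0:ℝ) t, S s x, int_mem x t⟩ = x - S t x
  gen_eq_dom : ∀ (x : dom) (t : ℝ), 0 ≤ t →
    S t (x : X) - (x : X) = - ∫ s in Set.Ioc (0:ℝ) t, S s (Aop x)
  inter_sub : ∀ (x : X) (y : Y),
    (∃ u : ℕ → dom, Filter.Tendsto (fun n => jY (u n)) Filter.atTop (nhds y)) →
    ιX x = ιY y → x ∈ dom

namespace DPG

variable {X Y Z : Type*} [NormedAddCommGroup X] [NormedSpace ℂ X] [CompleteSpace X]
  [NormedAddCommGroup Y] [NormedSpace ℂ Y]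
  [AddCommGroup Z] [Module ℂ Z] [TopologicalSpace Z] [T2Space Z]
  (E : DPG X Y Z)

/-- `A` as an everywhere-defined function on `X` (junk value `0` off the domain). -/
def Afun (x : X) : X := if h : x ∈ E.dom then E.Aop ⟨x, h⟩ else 0

/-- The domain `D(Ȧ) ⊆ Y` of the homogeneous operator: limits in `Y` of sequences in `D(A)`. -/
def DdotA : Set Y :=
  {y : Y | ∃ u : ℕ → E.dom, Filter.Tendsto (fun n => E.jY (u n)) Filter.atTop (nhds y)}

/-- The homogeneous operator `Ȧ : D(Ȧ) → X`, `Ȧ y = lim_k A x_k` for `x_k → y` in `Y`. -/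
def Adot (y : Y) : X :=
  @Classical.epsilon X ⟨0⟩ fun L =>
    ∃ u : ℕ → E.dom, Filter.Tendsto (fun n => E.jY (u n)) Filter.atTop (nhds y) ∧
      Filter.Tendsto (fun n => E.Aop (u n)) Filter.atTop (nhds L)

/-- The sum space `X + D(Ȧ)`, realized inside the ambient space `Z`. -/
def sumSpace : Set Z :=
  {z : Z | ∃ (x : X) (y : Y), y ∈ E.DdotA ∧ z = E.ιX x + E.ιY y}

/-- A choice of the `X`-component of an element of `X + D(Ȧ)`. -/
def decompX (z : Z) : X :=
  if h : ∃ (x : X) (y : Y), y ∈ E.DdotA ∧ z = E.ιX x + E.ιY y then h.choose else 0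

/-- A choice of the `D(Ȧ)`-component of an element of `X + D(Ȧ)`. -/
def decompY (z : Z) : Y :=
  if h : ∃ (x : X) (y : Y), y ∈ E.DdotA ∧ z = E.ιX x + E.ιY y then h.choose_spec.choose else 0

/-- `Ȧ` acting on elements of `Z` lying in (the image of) `D(Ȧ)`. -/
def AdotZ (z : Z) : X :=
  if h : ∃ y : Y, y ∈ E.DdotA ∧ E.ιY y = z then E.Adot h.choose else 0

/-- The extension of the semigroup to the sum space:
`e^{−tA}(x+y) = e^{−tA}x + y − ∫₀ᵗ e^{−sA}Ȧy ds`. -/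
def SGext (t : ℝ) (z : Z) : Z :=
  E.ιX (E.S t (E.decompX z) - ∫ s in Set.Ioc (0:ℝ) t, E.S s (E.Adot (E.decompY z)))
    + E.ιY (E.decompY z)

/-- `Ȧ e^{−tA} z` for `z ∈ X + D(Ȧ)`. -/
def AdotSG (z : Z) (t : ℝ) : X := E.AdotZ (E.SGext t z)

/-- The homogeneous Da Prato–Grisvard norm `‖z‖_{Ḋ_A(θ,q)}` on the sum space. -/
def homNorm (θ : ℝ) (q : ℝ≥0∞) (z : Z) : ℝ≥0∞ :=
  MeasureTheory.eLpNorm (fun t : ℝ => t ^ (1 - θ) • E.AdotSG z t) q haarScale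

/-- The homogeneous Da Prato–Grisvard norm of an element of `X`
(for which `Ȧe^{−tA}x = Ae^{−tA}x`). -/
def homNormX (θ : ℝ) (q : ℝ≥0∞) (x : X) : ℝ≥0∞ :=
  MeasureTheory.eLpNorm (fun t : ℝ => t ^ (1 - θ) • E.Afun (E.S t x)) q haarScale

/-- The (inhomogeneous) norm of `D_A(θ,q)`. -/
def inhomNorm (θ : ℝ) (q : ℝ≥0∞) (x : X) : ℝ≥0∞ :=
  ENNReal.ofReal ‖x‖ + E.homNormX θ q x

/-- Membership in `D_A(θ,q)`. -/
def memDA (θ : ℝ) (q : ℝ≥0∞) (x : X) : Prop :=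
  MeasureTheory.AEStronglyMeasurable (fun t : ℝ => t ^ (1 - θ) • E.Afun (E.S t x)) haarScale ∧
    E.homNormX θ q x < ⊤

/-- Membership in `Ḋ_A(θ,q)`. -/
def memDdot (θ : ℝ) (q : ℝ≥0∞) (z : Z) : Prop :=
  z ∈ E.sumSpace ∧
    MeasureTheory.AEStronglyMeasurable (fun t : ℝ => t ^ (1 - θ) • E.AdotSG z t) haarScale ∧
    E.homNorm θ q z < ⊤

/-- The `K`-functional of the interpolation couple `(X, D(Ȧ))`. -/
def Kfun (t : ℝ) (z : Z) : ℝ≥0∞ :=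
  ⨅ (x : X) (y : Y) (_ : y ∈ E.DdotA) (_ : E.ιX x + E.ιY y = z),
    ENNReal.ofReal (‖x‖ + t * ‖E.Adot y‖)

/-- The real interpolation norm of `(X, D(Ȧ))_{θ,q}`. -/
def interpNorm (θ : ℝ) (q : ℝ≥0∞) (z : Z) : ℝ≥0∞ :=
  lqNorm q haarScale fun t => ENNReal.ofReal (t ^ (-θ)) * E.Kfun t z

end DPG

section HardyMachinery

open MeasureTheory Set Filter



open MeasureTheory

lemma measurable_density : Measurable fun t : ℝ => ENNReal.ofReal t⁻¹ :=
  ENNReal.measurable_ofReal.comp measurable_inv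

lemma haar_ae_iff {p : ℝ → Prop} :
    (∀ᵐ t ∂haarScale, p t) ↔ ∀ᵐ t ∂(volume.restrict (Set.Ioi (0:ℝ))), p t := by
  rw [haarScale, MeasureTheory.ae_withDensity_iff measurable_density]
  constructor
  · intro h
    filter_upwards [h, ae_restrict_mem measurableSet_Ioi] with t ht ht0
    exact ht (ENNReal.ofReal_pos.mpr (inv_pos.2 ht0)).ne'
  · intro h
    filter_upwards [h] with t ht _
    exact ht

lemma haar_ae_pos : ∀ᵐ t ∂haarScale, 0 < t :=
  haar_ae_iff.2 (ae_restrict_mem measurableSet_Ioi)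

lemma lintegral_haar (g : ℝ → ℝ≥0∞) :
    ∫⁻ t, g t ∂haarScale = ∫⁻ t in Set.Ioi (0:ℝ), ENNReal.ofReal t⁻¹ * g t := by
  rw [haarScale, lintegral_withDensity_eq_lintegral_mul_non_measurable _ measurable_density
    (Filter.Eventually.of_forall fun t => ENNReal.ofReal_lt_top)]
  rfl

lemma lintegral_haar_Ioc (t : ℝ) (g : ℝ → ℝ≥0∞) :
    ∫⁻ s in Set.Ioc (0:ℝ) t, g s ∂haarScale
      = ∫⁻ s in Set.Ioc (0:ℝ) t, ENNReal.ofReal s⁻¹ * g s := by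
  have h1 : haarScale.restrict (Set.Ioc (0:ℝ) t)
      = (volume.restrict (Set.Ioc (0:ℝ) t)).withDensity fun s => ENNReal.ofReal s⁻¹ := by
    rw [haarScale, restrict_withDensity measurableSet_Ioc, Measure.restrict_restrict
      measurableSet_Ioc, Set.inter_eq_left.mpr Set.Ioc_subset_Ioi_self]
  rw [h1, lintegral_withDensity_eq_lintegral_mul_non_measurable _ measurable_density
    (Filter.Eventually.of_forall fun t => ENNReal.ofReal_lt_top)]
  rfl

lemma moment_lintegral {θ : ℝ} (hθ : 0 < θ) {t : ℝ} (ht : 0 < t) :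
    ∫⁻ s in Set.Ioc (0:ℝ) t, ENNReal.ofReal (s ^ (θ - 1)) = ENNReal.ofReal (t ^ θ / θ) := by
  have hInt : IntegrableOn (fun s : ℝ => s ^ (θ - 1)) (Set.Ioc (0:ℝ) t) :=
    (intervalIntegral.intervalIntegrable_rpow' (by linarith)).1
  have hpos : 0 ≤ᵐ[volume.restrict (Set.Ioc (0:ℝ) t)] fun s : ℝ => s ^ (θ - 1) := by
    filter_upwards [ae_restrict_mem measurableSet_Ioc] with s hs
    exact Real.rpow_nonneg hs.1.le _
  rw [← MeasureTheory.ofReal_integral_eq_lintegral_ofReal hInt hpos]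
  congr 1
  rw [← intervalIntegral.integral_of_le ht.le,
    integral_rpow (Or.inl (by linarith : (-1:ℝ) < θ - 1))]
  rw [sub_add_cancel, Real.zero_rpow hθ.ne', sub_zero]

lemma tail_lintegral {θ : ℝ} (hθ : 0 < θ) {s : ℝ} (hs : 0 < s) :
    ∫⁻ t in Set.Ioi s, ENNReal.ofReal (t ^ (-θ - 1)) = ENNReal.ofReal (s ^ (-θ) / θ) := by
  have hInt : IntegrableOn (fun t : ℝ => t ^ (-θ - 1)) (Set.Ioi s) :=
    integrableOn_Ioi_rpow_of_lt (by linarith) hs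
  have hpos : 0 ≤ᵐ[volume.restrict (Set.Ioi s)] fun t : ℝ => t ^ (-θ - 1) := by
    filter_upwards [ae_restrict_mem measurableSet_Ioi] with t htmem
    exact Real.rpow_nonneg (hs.trans htmem).le _
  rw [← MeasureTheory.ofReal_integral_eq_lintegral_ofReal hInt hpos]
  congr 1
  rw [integral_Ioi_rpow_of_lt (by linarith) hs]
  rw [show -θ - 1 + 1 = -θ by ring, div_neg, neg_div, neg_neg]


lemma holder_pt {θ : ℝ} (hθ : 0 < θ) {p : ℝ} (hp : 1 ≤ p) (G : ℝ → ℝ≥0∞)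
    (hG : Measurable G) {t : ℝ} (ht : 0 < t)
    (hmoment : ∫⁻ s in Set.Ioc (0:ℝ) t, ENNReal.ofReal (s ^ (θ - 1))
        = ENNReal.ofReal (t ^ θ / θ)) :
    (∫⁻ s in Set.Ioc (0:ℝ) t, ENNReal.ofReal (s ^ (θ - 1)) * G s) ^ p
      ≤ ENNReal.ofReal ((t ^ θ / θ) ^ (p - 1))
          * ∫⁻ s in Set.Ioc (0:ℝ) t, ENNReal.ofReal (s ^ (θ - 1)) * G s ^ p := by
  rcases eq_or_lt_of_le hp with hp1 | hp1
  · rw [← hp1]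
    simp [ENNReal.rpow_one]
  · have hp0 : (0:ℝ) < p := lt_trans one_pos hp1
    set p' : ℝ := p / (p - 1) with hp'def
    have hpq : p'.HolderConjugate p := by
      rw [Real.holderConjugate_iff]
      constructor
      · rw [hp'def]
        rw [lt_div_iff₀ (by linarith)]
        linarith
      · rw [hp'def]
        field_simp
        ring
    have hp'0 : (0:ℝ) < p' := hpq.pos
    have key : ∀ s : ℝ, ENNReal.ofReal (s ^ (θ - 1)) * G s
        = ((ENNReal.ofReal (s ^ (θ - 1))) ^ p'⁻¹)
            * ((ENNReal.ofReal (s ^ (θ - 1))) ^ p⁻¹ * G s) := by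
      intro s
      rw [← mul_assoc, ← ENNReal.rpow_add_of_nonneg _ _ (by positivity) (by positivity),
        hpq.inv_add_inv_eq_one, ENNReal.rpow_one]
    have hmeas1 : AEMeasurable (fun s : ℝ => (ENNReal.ofReal (s ^ (θ - 1))) ^ p'⁻¹)
        (volume.restrict (Set.Ioc (0:ℝ) t)) := by
      fun_prop
    have hmeas2 : AEMeasurable (fun s : ℝ => (ENNReal.ofReal (s ^ (θ - 1))) ^ p⁻¹ * G s)
        (volume.restrict (Set.Ioc (0:ℝ) t)) := by
      fun_prop
    have holder := ENNReal.lintegral_mul_le_Lp_mul_Lq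
      (volume.restrict (Set.Ioc (0:ℝ) t)) hpq hmeas1 hmeas2
    have hstep : ∫⁻ s in Set.Ioc (0:ℝ) t, ENNReal.ofReal (s ^ (θ - 1)) * G s
        ≤ (ENNReal.ofReal (t ^ θ / θ)) ^ p'⁻¹
            * (∫⁻ s in Set.Ioc (0:ℝ) t, ENNReal.ofReal (s ^ (θ - 1)) * G s ^ p) ^ p⁻¹ := by
      calc ∫⁻ s in Set.Ioc (0:ℝ) t, ENNReal.ofReal (s ^ (θ - 1)) * G s
          = ∫⁻ s in Set.Ioc (0:ℝ) t, ((ENNReal.ofReal (s ^ (θ - 1))) ^ p'⁻¹)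
              * ((ENNReal.ofReal (s ^ (θ - 1))) ^ p⁻¹ * G s) := by
            exact lintegral_congr fun s => key s
        _ ≤ (∫⁻ s in Set.Ioc (0:ℝ) t, ((ENNReal.ofReal (s ^ (θ - 1))) ^ p'⁻¹) ^ p') ^ (1/p')
              * (∫⁻ s in Set.Ioc (0:ℝ) t,
                  ((ENNReal.ofReal (s ^ (θ - 1))) ^ p⁻¹ * G s) ^ p) ^ (1/p) := holder
        _ = (ENNReal.ofReal (t ^ θ / θ)) ^ p'⁻¹
              * (∫⁻ s in Set.Ioc (0:ℝ) t, ENNReal.ofReal (s ^ (θ - 1)) * G s ^ p) ^ p⁻¹ := by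
            rw [one_div, one_div]
            congr 1
            · congr 1
              · rw [← hmoment]
                apply lintegral_congr
                intro s
                rw [← ENNReal.rpow_mul, inv_mul_cancel₀ hp'0.ne', ENNReal.rpow_one]
            · congr 1
              apply lintegral_congr
              intro s
              rw [ENNReal.mul_rpow_of_nonneg _ _ hp0.le, ← ENNReal.rpow_mul,
                inv_mul_cancel₀ hp0.ne', ENNReal.rpow_one]
    calc (∫⁻ s in Set.Ioc (0:ℝ) t, ENNReal.ofReal (s ^ (θ - 1)) * G s) ^ p
        ≤ ((ENNReal.ofReal (t ^ θ / θ)) ^ p'⁻¹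
            * (∫⁻ s in Set.Ioc (0:ℝ) t, ENNReal.ofReal (s ^ (θ - 1)) * G s ^ p) ^ p⁻¹) ^ p :=
          ENNReal.rpow_le_rpow hstep hp0.le
      _ = ENNReal.ofReal ((t ^ θ / θ) ^ (p - 1))
            * ∫⁻ s in Set.Ioc (0:ℝ) t, ENNReal.ofReal (s ^ (θ - 1)) * G s ^ p := by
          rw [ENNReal.mul_rpow_of_nonneg _ _ hp0.le, ← ENNReal.rpow_mul, ← ENNReal.rpow_mul,
            inv_mul_cancel₀ hp0.ne', ENNReal.rpow_one]
          congr 1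
          have : p'⁻¹ * p = p - 1 := by
            rw [hp'def]
            field_simp
          rw [this, ENNReal.ofReal_rpow_of_pos (by positivity)]

lemma hardy_tonelli {θ : ℝ} (hθ : 0 < θ) {G : ℝ → ℝ≥0∞} (hG : Measurable G)
    (hfin : ∀ s, G s ≠ ⊤) :
    ∫⁻ t in Set.Ioi (0:ℝ), ENNReal.ofReal (t ^ (-θ - 1))
        * ∫⁻ s in Set.Ioc (0:ℝ) t, ENNReal.ofReal (s ^ (θ - 1)) * G s
      = ENNReal.ofReal θ⁻¹ * ∫⁻ s in Set.Ioi (0:ℝ), ENNReal.ofReal s⁻¹ * G s := by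
  set F : ℝ → ℝ → ℝ≥0∞ := fun t s =>
    Set.indicator (Set.Ioc (0:ℝ) t)
      (fun s => ENNReal.ofReal (t ^ (-θ - 1)) * (ENNReal.ofReal (s ^ (θ - 1)) * G s)) s
    with hFdef
  have hFmeas : Measurable (Function.uncurry F) := by
    have heq : Function.uncurry F = fun q : ℝ × ℝ =>
        Set.indicator {q : ℝ × ℝ | 0 < q.2 ∧ q.2 ≤ q.1}
          (fun q => ENNReal.ofReal (q.1 ^ (-θ - 1))
            * (ENNReal.ofReal (q.2 ^ (θ - 1)) * G q.2)) q := by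
      ext q
      simp only [Function.uncurry, hFdef, Set.indicator_apply, Set.mem_Ioc, Set.mem_setOf_eq]
    rw [heq]
    apply Measurable.indicator
    · fun_prop
    · exact (measurableSet_lt measurable_const measurable_snd).inter
        (measurableSet_le measurable_snd measurable_fst)
  have step1 : ∀ t : ℝ, (Set.Ioi (0:ℝ)).indicator
      (fun t => ENNReal.ofReal (t ^ (-θ - 1))
        * ∫⁻ s in Set.Ioc (0:ℝ) t, ENNReal.ofReal (s ^ (θ - 1)) * G s) t
      = ∫⁻ s, F t s := by
    intro t
    by_cases ht : t ∈ Set.Ioi (0:ℝ)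
    · rw [Set.indicator_of_mem ht, hFdef]
      rw [lintegral_indicator measurableSet_Ioc]
      rw [lintegral_const_mul' _ _ ENNReal.ofReal_ne_top]
    · rw [Set.indicator_of_notMem ht]
      have hempty : Set.Ioc (0:ℝ) t = ∅ := Set.Ioc_eq_empty (by simpa using ht)
      simp [hFdef, hempty]
  have step2 : ∀ s : ℝ, ∫⁻ t, F t s
      = (Set.Ioi (0:ℝ)).indicator
          (fun s => ENNReal.ofReal (s ^ (-θ) / θ)
            * (ENNReal.ofReal (s ^ (θ - 1)) * G s)) s := by
    intro s
    by_cases hs : s ∈ Set.Ioi (0:ℝ)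
    · have hs0 : (0:ℝ) < s := hs
      have hrepr : ∀ t : ℝ, F t s
          = Set.indicator (Set.Ici s) (fun t => ENNReal.ofReal (t ^ (-θ - 1))) t
              * (ENNReal.ofReal (s ^ (θ - 1)) * G s) := by
        intro t
        by_cases hst : s ≤ t
        · rw [hFdef]
          simp only
          rw [Set.indicator_of_mem (Set.mem_Ioc.mpr ⟨hs0, hst⟩),
            Set.indicator_of_mem (Set.mem_Ici.mpr hst)]
        · rw [hFdef]
          simp only
          rw [Set.indicator_of_notMem (fun h => hst h.2),
            Set.indicator_of_notMem (fun h => hst (Set.mem_Ici.mp h)), zero_mul]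
      rw [lintegral_congr hrepr,
        lintegral_mul_const' _ _ (ENNReal.mul_ne_top ENNReal.ofReal_ne_top (hfin s)),
        lintegral_indicator measurableSet_Ici,
        show volume.restrict (Set.Ici s) = volume.restrict (Set.Ioi s) from
          (Measure.restrict_congr_set Ioi_ae_eq_Ici).symm,
        tail_lintegral hθ hs0, Set.indicator_of_mem hs, mul_comm]
    · have hzero : ∀ t : ℝ, F t s = 0 := by
        intro t
        rw [hFdef]
        simp only
        rw [Set.indicator_of_notMem (fun h => hs (Set.mem_Ioi.mpr h.1))]
      simp [hzero, Set.indicator_of_notMem hs]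
  calc ∫⁻ t in Set.Ioi (0:ℝ), ENNReal.ofReal (t ^ (-θ - 1))
        * ∫⁻ s in Set.Ioc (0:ℝ) t, ENNReal.ofReal (s ^ (θ - 1)) * G s
      = ∫⁻ t, (Set.Ioi (0:ℝ)).indicator
          (fun t => ENNReal.ofReal (t ^ (-θ - 1))
            * ∫⁻ s in Set.Ioc (0:ℝ) t, ENNReal.ofReal (s ^ (θ - 1)) * G s) t :=
        (lintegral_indicator measurableSet_Ioi _).symm
    _ = ∫⁻ t, ∫⁻ s, F t s := lintegral_congr step1
    _ = ∫⁻ s, ∫⁻ t, F t s := lintegral_lintegral_swap hFmeas.aemeasurable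
    _ = ∫⁻ s, (Set.Ioi (0:ℝ)).indicator
          (fun s => ENNReal.ofReal (s ^ (-θ) / θ)
            * (ENNReal.ofReal (s ^ (θ - 1)) * G s)) s := lintegral_congr step2
    _ = ∫⁻ s in Set.Ioi (0:ℝ), ENNReal.ofReal (s ^ (-θ) / θ)
          * (ENNReal.ofReal (s ^ (θ - 1)) * G s) := lintegral_indicator measurableSet_Ioi _
    _ = ∫⁻ s in Set.Ioi (0:ℝ), ENNReal.ofReal θ⁻¹ * (ENNReal.ofReal s⁻¹ * G s) := by
        apply setLIntegral_congr_fun measurableSet_Ioi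
        intro s hs
        have hs0 : (0:ℝ) < s := hs
        beta_reduce
        rw [← mul_assoc, ← mul_assoc, ← ENNReal.ofReal_mul (by positivity),
          ← ENNReal.ofReal_mul (by positivity)]
        congr 2
        rw [div_mul_eq_mul_div, ← Real.rpow_add hs0, show -θ + (θ - 1) = -1 by ring,
          Real.rpow_neg_one]
        ring
    _ = ENNReal.ofReal θ⁻¹ * ∫⁻ s in Set.Ioi (0:ℝ), ENNReal.ofReal s⁻¹ * G s :=
        lintegral_const_mul' _ _ ENNReal.ofReal_ne_top

lemma hardy_core_top {θ : ℝ} (hθ : 0 < θ) {G : ℝ → ℝ≥0∞} (hG : Measurable G)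
    (hfin : ∀ s, G s ≠ ⊤) :
    essSup (fun t => ENNReal.ofReal (t ^ (-θ))
        * ∫⁻ s in Set.Ioc (0:ℝ) t, ENNReal.ofReal (s ^ (θ - 1)) * G s) haarScale
      ≤ ENNReal.ofReal θ⁻¹ * essSup G haarScale := by
  set B := essSup G haarScale with hBdef
  rcases eq_or_ne B ⊤ with hB | hB
  · rw [hB, ENNReal.mul_top (ENNReal.ofReal_pos.mpr (inv_pos.2 hθ)).ne']
    exact le_top
  · have hGB : ∀ᵐ s ∂(volume.restrict (Set.Ioi (0:ℝ))), G s ≤ B :=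
      haar_ae_iff.1 (ae_le_essSup (f := G))
    refine essSup_le_of_ae_le _ ?_
    filter_upwards [haar_ae_pos] with t ht
    have hbound : ∫⁻ s in Set.Ioc (0:ℝ) t, ENNReal.ofReal (s ^ (θ - 1)) * G s
        ≤ ENNReal.ofReal (t ^ θ / θ) * B := by
      have hGB' : ∀ᵐ s ∂(volume.restrict (Set.Ioc (0:ℝ) t)), G s ≤ B :=
        Filter.Eventually.filter_mono
          (ae_mono (Measure.restrict_mono Set.Ioc_subset_Ioi_self le_rfl)) hGB
      calc ∫⁻ s in Set.Ioc (0:ℝ) t, ENNReal.ofReal (s ^ (θ - 1)) * G s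
          ≤ ∫⁻ s in Set.Ioc (0:ℝ) t, ENNReal.ofReal (s ^ (θ - 1)) * B := by
            apply lintegral_mono_ae
            filter_upwards [hGB'] with s hsB
            exact mul_le_mul_right hsB _
        _ = ENNReal.ofReal (t ^ θ / θ) * B := by
            rw [lintegral_mul_const' _ _ hB, moment_lintegral hθ ht]
    calc ENNReal.ofReal (t ^ (-θ))
          * ∫⁻ s in Set.Ioc (0:ℝ) t, ENNReal.ofReal (s ^ (θ - 1)) * G s
        ≤ ENNReal.ofReal (t ^ (-θ)) * (ENNReal.ofReal (t ^ θ / θ) * B) :=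
          mul_le_mul_right hbound _
      _ = ENNReal.ofReal θ⁻¹ * B := by
          rw [← mul_assoc, ← ENNReal.ofReal_mul (by positivity)]
          congr 2
          rw [← mul_div_assoc, ← Real.rpow_add ht, neg_add_cancel, Real.rpow_zero]
          exact one_div θ

lemma hardy_core_lp {θ : ℝ} (hθ : 0 < θ) {p : ℝ} (hp : 1 ≤ p) {G : ℝ → ℝ≥0∞}
    (hG : Measurable G) (hfin : ∀ s, G s ≠ ⊤) :
    (∫⁻ t, (ENNReal.ofReal (t ^ (-θ))
        * ∫⁻ s in Set.Ioc (0:ℝ) t, ENNReal.ofReal (s ^ (θ - 1)) * G s) ^ p ∂haarScale)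
          ^ (1 / p)
      ≤ ENNReal.ofReal θ⁻¹ * (∫⁻ t, G t ^ p ∂haarScale) ^ (1 / p) := by
  have hp0 : (0:ℝ) < p := lt_of_lt_of_le one_pos hp
  have hGp : Measurable fun s => G s ^ p := hG.pow_const p
  have hGpfin : ∀ s, G s ^ p ≠ ⊤ := fun s =>
    ENNReal.rpow_ne_top_of_nonneg hp0.le (hfin s)
  have key : ∫⁻ t, (ENNReal.ofReal (t ^ (-θ))
      * ∫⁻ s in Set.Ioc (0:ℝ) t, ENNReal.ofReal (s ^ (θ - 1)) * G s) ^ p ∂haarScale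
      ≤ ENNReal.ofReal (θ ^ (-p)) * ∫⁻ t, G t ^ p ∂haarScale := by
    rw [lintegral_haar, lintegral_haar (fun t => G t ^ p)]
    calc ∫⁻ t in Set.Ioi (0:ℝ), ENNReal.ofReal t⁻¹ * (ENNReal.ofReal (t ^ (-θ))
            * ∫⁻ s in Set.Ioc (0:ℝ) t, ENNReal.ofReal (s ^ (θ - 1)) * G s) ^ p
        ≤ ∫⁻ t in Set.Ioi (0:ℝ), ENNReal.ofReal (θ ^ (1 - p))
            * (ENNReal.ofReal (t ^ (-θ - 1))
              * ∫⁻ s in Set.Ioc (0:ℝ) t, ENNReal.ofReal (s ^ (θ - 1)) * G s ^ p) := by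
          apply lintegral_mono_ae
          filter_upwards [ae_restrict_mem measurableSet_Ioi] with t htmem
          have ht0 : (0:ℝ) < t := htmem
          have h1 : (ENNReal.ofReal (t ^ (-θ))
              * ∫⁻ s in Set.Ioc (0:ℝ) t, ENNReal.ofReal (s ^ (θ - 1)) * G s) ^ p
              ≤ ENNReal.ofReal ((t ^ (-θ)) ^ p) * (ENNReal.ofReal ((t ^ θ / θ) ^ (p - 1))
                  * ∫⁻ s in Set.Ioc (0:ℝ) t, ENNReal.ofReal (s ^ (θ - 1)) * G s ^ p) := by
            rw [ENNReal.mul_rpow_of_nonneg _ _ hp0.le,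
              ENNReal.ofReal_rpow_of_pos (Real.rpow_pos_of_pos ht0 _)]
            exact mul_le_mul_right (holder_pt hθ hp G hG ht0 (moment_lintegral hθ ht0)) _
          have h2 : ENNReal.ofReal t⁻¹ * (ENNReal.ofReal ((t ^ (-θ)) ^ p)
              * (ENNReal.ofReal ((t ^ θ / θ) ^ (p - 1))
                * ∫⁻ s in Set.Ioc (0:ℝ) t, ENNReal.ofReal (s ^ (θ - 1)) * G s ^ p))
              = ENNReal.ofReal (θ ^ (1 - p)) * (ENNReal.ofReal (t ^ (-θ - 1))
                * ∫⁻ s in Set.Ioc (0:ℝ) t, ENNReal.ofReal (s ^ (θ - 1)) * G s ^ p) := by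
            rw [← mul_assoc, ← mul_assoc, ← ENNReal.ofReal_mul (by positivity),
              ← ENNReal.ofReal_mul (by positivity)]
            rw [← mul_assoc, ← ENNReal.ofReal_mul (by positivity)]
            congr 2
            have e1 : (t ^ (-θ)) ^ p = t ^ (-θ * p) := (Real.rpow_mul ht0.le _ _).symm
            have e2 : (t ^ θ / θ) ^ (p - 1) = t ^ (θ * (p - 1)) * θ ^ (-(p - 1)) := by
              rw [Real.div_rpow (Real.rpow_nonneg ht0.le _) hθ.le, ← Real.rpow_mul ht0.le,
                Real.rpow_neg hθ.le, div_eq_mul_inv]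
            have e3 : t⁻¹ = t ^ (-1:ℝ) := (Real.rpow_neg_one t).symm
            rw [e1, e2, e3, show (1:ℝ) - p = -(p - 1) by ring]
            calc t ^ (-1:ℝ) * (t ^ (-θ * p)) * (t ^ (θ * (p - 1)) * θ ^ (-(p - 1)))
                = t ^ (-1:ℝ) * t ^ (-θ * p) * t ^ (θ * (p - 1)) * θ ^ (-(p - 1)) := by
                  ring
              _ = t ^ (-1 + -θ * p + θ * (p - 1)) * θ ^ (-(p - 1)) := by
                  rw [← Real.rpow_add ht0, ← Real.rpow_add ht0]
              _ = θ ^ (-(p - 1)) * t ^ (-θ - 1) := by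
                  rw [show (-1:ℝ) + -θ * p + θ * (p - 1) = -θ - 1 by ring]
                  ring
          calc ENNReal.ofReal t⁻¹ * (ENNReal.ofReal (t ^ (-θ))
                * ∫⁻ s in Set.Ioc (0:ℝ) t, ENNReal.ofReal (s ^ (θ - 1)) * G s) ^ p
              ≤ ENNReal.ofReal t⁻¹ * (ENNReal.ofReal ((t ^ (-θ)) ^ p)
                  * (ENNReal.ofReal ((t ^ θ / θ) ^ (p - 1))
                    * ∫⁻ s in Set.Ioc (0:ℝ) t, ENNReal.ofReal (s ^ (θ - 1)) * G s ^ p)) :=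
                mul_le_mul_right h1 _
            _ = ENNReal.ofReal (θ ^ (1 - p)) * (ENNReal.ofReal (t ^ (-θ - 1))
                  * ∫⁻ s in Set.Ioc (0:ℝ) t, ENNReal.ofReal (s ^ (θ - 1)) * G s ^ p) := h2
      _ = ENNReal.ofReal (θ ^ (-p)) * ∫⁻ t in Set.Ioi (0:ℝ), ENNReal.ofReal t⁻¹ * G t ^ p := by
          rw [lintegral_const_mul' _ _ ENNReal.ofReal_ne_top, hardy_tonelli hθ hGp hGpfin,
            ← mul_assoc, ← ENNReal.ofReal_mul (by positivity)]
          congr 2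
          rw [← Real.rpow_neg_one θ, ← Real.rpow_add hθ]
          congr 1
          ring
  calc (∫⁻ t, (ENNReal.ofReal (t ^ (-θ))
        * ∫⁻ s in Set.Ioc (0:ℝ) t, ENNReal.ofReal (s ^ (θ - 1)) * G s) ^ p ∂haarScale)
          ^ (1 / p)
      ≤ (ENNReal.ofReal (θ ^ (-p)) * ∫⁻ t, G t ^ p ∂haarScale) ^ (1 / p) :=
        ENNReal.rpow_le_rpow key (by positivity)
    _ = ENNReal.ofReal θ⁻¹ * (∫⁻ t, G t ^ p ∂haarScale) ^ (1 / p) := by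
        rw [ENNReal.mul_rpow_of_nonneg _ _ (by positivity : (0:ℝ) ≤ 1 / p)]
        congr 1
        rw [ENNReal.ofReal_rpow_of_pos (Real.rpow_pos_of_pos hθ _),
          ← Real.rpow_mul hθ.le]
        rw [show -p * (1 / p) = -1 by field_simp, Real.rpow_neg_one]

lemma lqNorm_congr_ae {q : ℝ≥0∞} {μ : Measure ℝ} {f g : ℝ → ℝ≥0∞} (h : f =ᵐ[μ] g) :
    lqNorm q μ f = lqNorm q μ g := by
  unfold lqNorm
  split_ifs
  · exact essSup_congr_ae h
  · congr 1
    apply lintegral_congr_ae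
    filter_upwards [h] with t ht
    rw [ht]

lemma lqNorm_add_le {q : ℝ≥0∞} (hq : 1 ≤ q) {f g : ℝ → ℝ≥0∞}
    (hf : AEMeasurable f haarScale) (hg : AEMeasurable g haarScale) :
    lqNorm q haarScale (fun t => f t + g t)
      ≤ lqNorm q haarScale f + lqNorm q haarScale g := by
  unfold lqNorm
  split_ifs with h
  · exact ENNReal.essSup_add_le f g
  · have hp : 1 ≤ q.toReal := by
      rw [← ENNReal.toReal_one]
      exact ENNReal.toReal_mono h hq
    exact ENNReal.lintegral_Lp_add_le hf hg hp

lemma hardy_core {θ : ℝ} (hθ : 0 < θ) {q : ℝ≥0∞} (hq : 1 ≤ q) {G : ℝ → ℝ≥0∞}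
    (hG : Measurable G) (hfin : ∀ s, G s ≠ ⊤) :
    lqNorm q haarScale (fun t => ENNReal.ofReal (t ^ (-θ))
        * ∫⁻ s in Set.Ioc (0:ℝ) t, ENNReal.ofReal (s ^ (θ - 1)) * G s)
      ≤ ENNReal.ofReal θ⁻¹ * lqNorm q haarScale G := by
  unfold lqNorm
  split_ifs with h
  · exact hardy_core_top hθ hG hfin
  · have hp : 1 ≤ q.toReal := by
      rw [← ENNReal.toReal_one]
      exact ENNReal.toReal_mono h hq
    exact hardy_core_lp hθ hp hG hfin

lemma eLpNorm_eq_lqNorm {E : Type*} [NormedAddCommGroup E] {q : ℝ≥0∞} (hq : q ≠ 0)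
    (f : ℝ → E) (μ : Measure ℝ) :
    eLpNorm f q μ = lqNorm q μ (fun t => (‖f t‖₊ : ℝ≥0∞)) := by
  unfold lqNorm
  split_ifs with h
  · rw [h, eLpNorm_exponent_top, eLpNormEssSup]
    simp only [enorm_eq_nnnorm]
  · rw [eLpNorm_eq_lintegral_rpow_enorm_toReal hq h]
    simp only [enorm_eq_nnnorm]

end HardyMachinery


namespace DPG

/-- Hardy-type estimate for the homogeneous Da Prato–Grisvard seminorm:
for `θ ∈ (0,1)`, `1 ≤ q ≤ ∞` and `z ∈ Ḋ_A(θ,q)`,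
`‖ t ↦ t^{−θ} ∫₀ᵗ ‖s Ȧ e^{−sA} z‖ ds/s + t^{1−θ}‖Ȧ e^{−tA} z‖ ‖_{L_{q,*}(0,∞)}
  ≤ ((1+θ)/θ) ‖z‖_{Ḋ_A(θ,q)}`. -/
theorem hardy_homogeneous_seminorm
    {X Y Z : Type*} [NormedAddCommGroup X] [NormedSpace ℂ X] [CompleteSpace X]
    [NormedAddCommGroup Y] [NormedSpace ℂ Y]
    [AddCommGroup Z] [Module ℂ Z] [TopologicalSpace Z] [T2Space Z]
    (E : DPG X Y Z) :
    ∀ θ : ℝ, 0 < θ → θ < 1 → ∀ q : ℝ≥0∞, 1 ≤ q → ∀ z : Z, E.memDdot θ q z →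
      lqNorm q haarScale (fun t : ℝ =>
          ENNReal.ofReal (t ^ (-θ)) *
              (∫⁻ s in Set.Ioc (0:ℝ) t, (‖s • E.AdotSG z s‖₊ : ℝ≥0∞) ∂haarScale)
            + ENNReal.ofReal (t ^ (1 - θ)) * (‖E.AdotSG z t‖₊ : ℝ≥0∞))
        ≤ ENNReal.ofReal ((1 + θ) / θ) * E.homNorm θ q z    := by
  intro θ hθ hθ1 q hq z hz
  obtain ⟨hzsum, hmeas, hfin⟩ := hz
  have hq0 : q ≠ 0 := (lt_of_lt_of_le zero_lt_one hq).ne'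
  set f : ℝ → X := fun t => t ^ (1 - θ) • E.AdotSG z t with hfdef
  set φ : ℝ → X := hmeas.mk f with hφdef
  have hφm : StronglyMeasurable φ := hmeas.stronglyMeasurable_mk
  have hfφ : f =ᵐ[haarScale] φ := hmeas.ae_eq_mk
  set G' : ℝ → ℝ≥0∞ := fun t => (‖φ t‖₊ : ℝ≥0∞) with hG'def
  have hG'm : Measurable G' := hφm.enorm
  have hG'fin : ∀ t, G' t ≠ ⊤ := fun t => ENNReal.coe_ne_top
  have hGG' : (fun t => (‖f t‖₊ : ℝ≥0∞)) =ᵐ[haarScale] G' := by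
    filter_upwards [hfφ] with t ht
    rw [hG'def]
    simp only [ht]
  have hvol : ∀ᵐ s ∂(volume.restrict (Set.Ioi (0:ℝ))), (‖f s‖₊ : ℝ≥0∞) = G' s :=
    haar_ae_iff.1 hGG'
  -- inner integral rewriting
  have hInner : ∀ t : ℝ, ∫⁻ s in Set.Ioc (0:ℝ) t, (‖s • E.AdotSG z s‖₊ : ℝ≥0∞) ∂haarScale
      = ∫⁻ s in Set.Ioc (0:ℝ) t, ENNReal.ofReal (s ^ (θ - 1)) * G' s := by
    intro t
    rw [lintegral_haar_Ioc]
    have h1 : ∫⁻ s in Set.Ioc (0:ℝ) t, ENNReal.ofReal s⁻¹ * (‖s • E.AdotSG z s‖₊ : ℝ≥0∞)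
        = ∫⁻ s in Set.Ioc (0:ℝ) t, ENNReal.ofReal (s ^ (θ - 1)) * (‖f s‖₊ : ℝ≥0∞) := by
      apply setLIntegral_congr_fun measurableSet_Ioc
      intro s hs
      have hs0 : (0:ℝ) < s := hs.1
      beta_reduce
      rw [nnnorm_smul, ENNReal.coe_mul,
        show f s = s ^ (1 - θ) • E.AdotSG z s from rfl, nnnorm_smul, ENNReal.coe_mul,
        ← mul_assoc, ← mul_assoc]
      congr 1
      rw [(by rw [← enorm_eq_nnnorm]; exact Real.enorm_eq_ofReal hs0.le : (‖s‖₊ : ℝ≥0∞) = ENNReal.ofReal s),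
        (by rw [← enorm_eq_nnnorm]; exact Real.enorm_eq_ofReal (Real.rpow_nonneg hs0.le _) : (‖s ^ (1 - θ)‖₊ : ℝ≥0∞) = ENNReal.ofReal (s ^ (1 - θ))),
        ← ENNReal.ofReal_mul (by positivity), ← ENNReal.ofReal_mul (by positivity)]
      congr 1
      rw [inv_mul_cancel₀ hs0.ne', ← Real.rpow_add hs0,
        show θ - 1 + (1 - θ) = 0 by ring, Real.rpow_zero]
    rw [h1]
    apply lintegral_congr_ae
    have hvol' : ∀ᵐ s ∂(volume.restrict (Set.Ioc (0:ℝ) t)), (‖f s‖₊ : ℝ≥0∞) = G' s :=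
      Filter.Eventually.filter_mono
        (ae_mono (Measure.restrict_mono Set.Ioc_subset_Ioi_self le_rfl)) hvol
    filter_upwards [hvol'] with s hsG
    rw [hsG]
  -- homNorm identification
  have hhom : E.homNorm θ q z = lqNorm q haarScale G' := by
    rw [homNorm, eLpNorm_eq_lqNorm hq0]
    exact lqNorm_congr_ae hGG'
  -- a.e. rewrite of the left-hand function
  have hΨ : lqNorm q haarScale (fun t : ℝ =>
        ENNReal.ofReal (t ^ (-θ)) *
            (∫⁻ s in Set.Ioc (0:ℝ) t, (‖s • E.AdotSG z s‖₊ : ℝ≥0∞) ∂haarScale)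
          + ENNReal.ofReal (t ^ (1 - θ)) * (‖E.AdotSG z t‖₊ : ℝ≥0∞))
      = lqNorm q haarScale (fun t : ℝ =>
        ENNReal.ofReal (t ^ (-θ)) *
            (∫⁻ s in Set.Ioc (0:ℝ) t, ENNReal.ofReal (s ^ (θ - 1)) * G' s)
          + G' t) := by
    apply lqNorm_congr_ae
    filter_upwards [haar_ae_pos, hGG'] with t ht hGt
    rw [hInner t]
    congr 1
    rw [← hGt, show f t = t ^ (1 - θ) • E.AdotSG z t from rfl, nnnorm_smul, ENNReal.coe_mul,
      (by rw [← enorm_eq_nnnorm]; exact Real.enorm_eq_ofReal (Real.rpow_nonneg ht.le _) : (‖t ^ (1 - θ)‖₊ : ℝ≥0∞) = ENNReal.ofReal (t ^ (1 - θ)))]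
  rw [hΨ, hhom]
  -- measurability of the Hardy term
  have hmono : Monotone fun t : ℝ => ∫⁻ s in Set.Ioc (0:ℝ) t,
      ENNReal.ofReal (s ^ (θ - 1)) * G' s := by
    intro a b hab
    exact lintegral_mono' (Measure.restrict_mono (Set.Ioc_subset_Ioc_right hab) le_rfl) le_rfl
  have hΦ₁m : Measurable fun t : ℝ => ENNReal.ofReal (t ^ (-θ)) *
      ∫⁻ s in Set.Ioc (0:ℝ) t, ENNReal.ofReal (s ^ (θ - 1)) * G' s := by
    exact (by fun_prop : Measurable fun t : ℝ => ENNReal.ofReal (t ^ (-θ))).mul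
      hmono.measurable
  calc lqNorm q haarScale (fun t : ℝ =>
        ENNReal.ofReal (t ^ (-θ)) *
            (∫⁻ s in Set.Ioc (0:ℝ) t, ENNReal.ofReal (s ^ (θ - 1)) * G' s)
          + G' t)
      ≤ lqNorm q haarScale (fun t : ℝ => ENNReal.ofReal (t ^ (-θ)) *
            ∫⁻ s in Set.Ioc (0:ℝ) t, ENNReal.ofReal (s ^ (θ - 1)) * G' s)
          + lqNorm q haarScale G' :=
        lqNorm_add_le hq hΦ₁m.aemeasurable hG'm.aemeasurable
    _ ≤ ENNReal.ofReal θ⁻¹ * lqNorm q haarScale G' + lqNorm q haarScale G' :=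
        add_le_add_left (hardy_core hθ hq hG'm hG'fin) _
    _ = ENNReal.ofReal ((1 + θ) / θ) * lqNorm q haarScale G' := by
        rw [show (1 + θ) / θ = θ⁻¹ + 1 by field_simp,
          ENNReal.ofReal_add (by positivity) zero_le_one, ENNReal.ofReal_one,
          add_mul, one_mul]


end DPG
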